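/- Let n ≥ 2 be a natural number and define F_n(θ) = (1/(n − 1)) · ( (1 − cos θ)/ sin θ )ⁿ · ( sin((π − θ)/2) )^{n+1} for θ ∈ (0, π). Then the quotient ( e^{−F_n(θ)}·(cos θ + sin θ) − (cos θ + sin θ) ) / θⁿ tends to −1/(2ⁿ·(n − 1)) as θ tends to 0 from the right. -/

import Mathlib

open Real Filter Set

/-- The general associated discrete mean curvature with exponent `n`. -/
noncomputable def assocMeanCurv (n : ℕ) (θ : ℝ) : ℝ :=
  (1 / ((n : ℝ) - 1)) * ((1 - Real.cos θ) / Real.sin θ) ^ n *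
    (Real.sin ((Real.pi - θ) / 2)) ^ (n + 1)

lemma aux_exp_slope : Tendsto (fun x : ℝ => (Real.exp x - 1) / x)
    (nhdsWithin 0 {0}ᶜ) (nhds 1) := by
  have h := Real.hasDerivAt_exp 0
  rw [Real.exp_zero] at h
  have := hasDerivAt_iff_tendsto_slope.mp h
  simpa [slope_fun_def, Real.exp_zero, div_eq_inv_mul] using this

lemma aux_tan_slope : Tendsto (fun x : ℝ => Real.tan x / x)
    (nhdsWithin 0 {0}ᶜ) (nhds 1) := by
  have h := Real.hasDerivAt_tan (x := 0) (by simp)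
  simp only [Real.cos_zero, one_pow, div_one] at h
  have := hasDerivAt_iff_tendsto_slope.mp h
  simpa [slope_fun_def, Real.tan_zero, div_eq_inv_mul] using this

/-- On `(0, π)` the mean curvature has the closed form `c · tan(θ/2)^n · cos(θ/2)^(n+1)`. -/
lemma assocMeanCurv_eq (n : ℕ) {θ : ℝ} (h0 : 0 < θ) (hπ : θ < Real.pi) :
    assocMeanCurv n θ =
      (1 / ((n : ℝ) - 1)) * (Real.tan (θ / 2)) ^ n * (Real.cos (θ / 2)) ^ (n + 1) := by
  have h2 : 0 < θ / 2 := by linarith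
  have h2' : θ / 2 < Real.pi / 2 := by linarith
  have hs : 0 < Real.sin (θ / 2) := Real.sin_pos_of_pos_of_lt_pi h2 (by linarith [Real.pi_pos])
  have hc : 0 < Real.cos (θ / 2) := Real.cos_pos_of_mem_Ioo ⟨by linarith, h2'⟩
  have h1 : 1 - Real.cos θ = 2 * Real.sin (θ / 2) ^ 2 := by
    have := Real.sin_sq_eq_half_sub (θ / 2)
    rw [show 2 * (θ / 2) = θ by ring] at this
    linarith
  have h2s : Real.sin θ = 2 * Real.sin (θ / 2) * Real.cos (θ / 2) := by
    have := Real.sin_two_mul (θ / 2)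
    rw [show 2 * (θ / 2) = θ by ring] at this
    linarith
  have hrat : (1 - Real.cos θ) / Real.sin θ = Real.tan (θ / 2) := by
    rw [h1, h2s, Real.tan_eq_sin_div_cos]
    field_simp
  have hcos : Real.sin ((Real.pi - θ) / 2) = Real.cos (θ / 2) := by
    rw [show (Real.pi - θ) / 2 = Real.pi / 2 - θ / 2 by ring, Real.sin_pi_div_two_sub]
  rw [assocMeanCurv, hrat, hcos]

/-- The Möbius-transformed coordinate-sum difference
`(e^{-F_n(θ)}(cos θ + sin θ) - (cos θ + sin θ))/θⁿ` tends to `-1/(2ⁿ(n-1))` as `θ → 0⁺`. -/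
theorem assocMeanCurv_moebius_difference (n : ℕ) (hn : 2 ≤ n) :
    Filter.Tendsto
      (fun θ : ℝ =>
        (Real.exp (-assocMeanCurv n θ) * (Real.cos θ + Real.sin θ) -
            (Real.cos θ + Real.sin θ)) / θ ^ n)
      (nhdsWithin 0 (Set.Ioi 0)) (nhds (-1 / (2 ^ n * ((n : ℝ) - 1)))) := by
  have hn1 : (0:ℝ) < (n : ℝ) - 1 := by
    have : (2:ℝ) ≤ (n:ℝ) := by exact_mod_cast hn
    linarith
  set c : ℝ := 1 / ((n : ℝ) - 1) with hc
  have hcpos : 0 < c := by positivity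
  -- membership of Ioo 0 π in the filter
  have hmem : Ioo (0:ℝ) Real.pi ∈ nhdsWithin (0:ℝ) (Set.Ioi 0) := by
    rw [mem_nhdsWithin]
    exact ⟨Iio Real.pi, isOpen_Iio, Real.pi_pos, fun x hx => ⟨hx.2, hx.1⟩⟩
  -- positivity of F on Ioo 0 π
  have hFpos : ∀ θ ∈ Ioo (0:ℝ) Real.pi, 0 < assocMeanCurv n θ := by
    intro θ hθ
    rw [assocMeanCurv_eq n hθ.1 hθ.2]
    have h2 : 0 < θ / 2 := by linarith [hθ.1]
    have h2' : θ / 2 < Real.pi / 2 := by linarith [hθ.2]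
    have ht : 0 < Real.tan (θ / 2) := Real.tan_pos_of_pos_of_lt_pi_div_two h2 h2'
    have hcθ : 0 < Real.cos (θ / 2) := Real.cos_pos_of_mem_Ioo ⟨by linarith, h2'⟩
    positivity
  -- F tends to 0
  have htanhalf : Tendsto (fun θ : ℝ => Real.tan (θ / 2)) (nhdsWithin 0 (Set.Ioi 0)) (nhds 0) := by
    have hcont : ContinuousAt Real.tan 0 := Real.continuousAt_tan.2 (by simp)
    have : Tendsto (fun θ : ℝ => θ / 2) (nhdsWithin 0 (Set.Ioi 0)) (nhds 0) := by
      have := (continuous_id.div_const (2:ℝ)).tendsto (0:ℝ)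
      simpa using this.mono_left nhdsWithin_le_nhds
    simpa [Real.tan_zero, Function.comp_def] using hcont.tendsto.comp this
  have hcoshalf : Tendsto (fun θ : ℝ => Real.cos (θ / 2)) (nhdsWithin 0 (Set.Ioi 0)) (nhds 1) := by
    have : Tendsto (fun θ : ℝ => θ / 2) (nhdsWithin 0 (Set.Ioi 0)) (nhds 0) := by
      have := (continuous_id.div_const (2:ℝ)).tendsto (0:ℝ)
      simpa using this.mono_left nhdsWithin_le_nhds
    simpa [Function.comp_def] using (Real.continuous_cos.tendsto 0).comp this
  have hF0 : Tendsto (fun θ => assocMeanCurv n θ) (nhdsWithin 0 (Set.Ioi 0)) (nhds 0) := by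
    have h1 : Tendsto (fun θ : ℝ => c * (Real.tan (θ / 2)) ^ n * (Real.cos (θ / 2)) ^ (n + 1))
        (nhdsWithin 0 (Set.Ioi 0)) (nhds (c * 0 ^ n * 1 ^ (n + 1))) :=
      ((tendsto_const_nhds.mul (htanhalf.pow n)).mul (hcoshalf.pow (n + 1)))
    have h2 : c * (0:ℝ) ^ n * 1 ^ (n + 1) = 0 := by
      rw [zero_pow (by omega : n ≠ 0)]; ring
    rw [h2] at h1
    refine h1.congr' ?_
    filter_upwards [hmem] with θ hθ
    rw [assocMeanCurv_eq n hθ.1 hθ.2]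
  -- -F tends to 0 within {0}ᶜ
  have hFne : Tendsto (fun θ => -assocMeanCurv n θ) (nhdsWithin 0 (Set.Ioi 0))
      (nhdsWithin 0 {0}ᶜ) := by
    rw [tendsto_nhdsWithin_iff]
    refine ⟨by simpa using hF0.neg, ?_⟩
    filter_upwards [hmem] with θ hθ
    exact (neg_ne_zero.2 (ne_of_gt (hFpos θ hθ)))
  have hA : Tendsto (fun θ => (Real.exp (-assocMeanCurv n θ) - 1) / (-assocMeanCurv n θ))
      (nhdsWithin 0 (Set.Ioi 0)) (nhds 1) := aux_exp_slope.comp hFne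
  -- tan(θ/2)/θ → 1/2
  have htanθ : Tendsto (fun θ : ℝ => Real.tan (θ / 2) / θ) (nhdsWithin 0 (Set.Ioi 0))
      (nhds (1 / 2)) := by
    have hhalf : Tendsto (fun θ : ℝ => θ / 2) (nhdsWithin 0 (Set.Ioi 0))
        (nhdsWithin 0 {0}ᶜ) := by
      rw [tendsto_nhdsWithin_iff]
      constructor
      · have := (continuous_id.div_const (2:ℝ)).tendsto (0:ℝ)
        simpa using this.mono_left nhdsWithin_le_nhds
      · filter_upwards [self_mem_nhdsWithin] with θ hθ
        simpa using (half_pos (Set.mem_Ioi.mp hθ)).ne'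
    have h1 : Tendsto (fun θ : ℝ => Real.tan (θ / 2) / (θ / 2))
        (nhdsWithin 0 (Set.Ioi 0)) (nhds 1) := aux_tan_slope.comp hhalf
    have h2 := h1.mul (tendsto_const_nhds (x := (1/2 : ℝ)))
    rw [one_mul] at h2
    refine h2.congr' ?_
    filter_upwards [self_mem_nhdsWithin] with θ hθ
    have hθ0 : (θ:ℝ) ≠ 0 := ne_of_gt hθ
    field_simp
  -- B tends to -(c * (1/2)^n)
  have hB : Tendsto (fun θ : ℝ =>
      -(c * (Real.tan (θ / 2) / θ) ^ n * (Real.cos (θ / 2)) ^ (n + 1)))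
      (nhdsWithin 0 (Set.Ioi 0)) (nhds (-(c * (1/2) ^ n * 1 ^ (n + 1)))) :=
    ((tendsto_const_nhds.mul (htanθ.pow n)).mul (hcoshalf.pow (n + 1))).neg
  -- coordinate sum tends to 1
  have hs : Tendsto (fun θ : ℝ => Real.cos θ + Real.sin θ) (nhdsWithin 0 (Set.Ioi 0))
      (nhds 1) := by
    have := ((Real.continuous_cos.add Real.continuous_sin).tendsto 0).mono_left
      (nhdsWithin_le_nhds : nhdsWithin (0:ℝ) (Set.Ioi 0) ≤ nhds 0)
    simpa [Pi.add_def] using this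
  have hmain := (hA.mul hB).mul hs
  have hval : 1 * -(c * (1/2:ℝ) ^ n * 1 ^ (n + 1)) * 1 = -1 / (2 ^ n * ((n : ℝ) - 1)) := by
    rw [hc]
    field_simp
    rw [one_pow, mul_one, ← mul_pow]; norm_num
  rw [hval] at hmain
  refine hmain.congr' ?_
  filter_upwards [hmem] with θ hθ
  have hθ0 : θ ≠ 0 := ne_of_gt hθ.1
  have hF := hFpos θ hθ
  have hFne' : assocMeanCurv n θ ≠ 0 := ne_of_gt hF
  have hEq : assocMeanCurv n θ =
      c * (Real.tan (θ / 2)) ^ n * (Real.cos (θ / 2)) ^ (n + 1) :=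
    assocMeanCurv_eq n hθ.1 hθ.2
  have htp : (Real.tan (θ / 2) / θ) ^ n = (Real.tan (θ / 2)) ^ n / θ ^ n := div_pow _ _ _
  rw [htp]
  have hθn : (θ:ℝ) ^ n ≠ 0 := pow_ne_zero _ hθ0
  field_simp
  rw [hEq]
  ring
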